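/- Let W be a boxworld process. Then the following are equivalent: (i) for every choice of finite nonempty classical sets X, A, Y, B and every pair of sets of probabilistic local operations T^{A|X} on Alice's wires and T^{B|Y} on Bob's wires, the generated correlations P̄ = (T^{A|X} ⊗ T^{B|Y}) * W satisfy that Σ_b P̄(a, b | x, y) is independent of y (no signaling from Bob to Alice); (ii) W = _{O'_B}W. The analogous equivalence holds with the roles of Alice and Bob interchanged, with condition W = _{O'_A}W. -/

import Mathlib

open Finset
open scoped Classical

noncomputable section

namespace Boxworld

/-- A bipartite 8-wire tensor `W(i'_A, o_A, i'_B, o_B | i_A, o'_A, i_B, o'_B)`,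
with output indices `IA' OA IB' OB` and input indices `IA OA' IB OB'`. -/
abbrev WTen (IA' OA IB' OB IA OA' IB OB' : Type) : Type :=
  IA' → OA → IB' → OB → IA → OA' → IB → OB' → ℝ

/-- A local-operation tensor `T(i, o' | i', o)`, argument order `(i', o, i, o')`. -/
abbrev OpTen (I' O I O' : Type) : Type := I' → O → I → O' → ℝ

section WireDefs

variable {IA' OA IB' OB IA OA' IB OB' : Type}
variable [Fintype IA'] [Fintype OA] [Fintype IB'] [Fintype OB]
variable [Fintype IA] [Fintype OA'] [Fintype IB] [Fintype OB']

/-- Reduce-and-replace over the index `IA'`. -/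
def rrIA' (W : WTen IA' OA IB' OB IA OA' IB OB') : WTen IA' OA IB' OB IA OA' IB OB' :=
  fun _ oa ib' ob ia oa' ib ob' => (∑ j, W j oa ib' ob ia oa' ib ob') / (Fintype.card IA' : ℝ)

/-- Reduce-and-replace over the index `OA`. -/
def rrOA (W : WTen IA' OA IB' OB IA OA' IB OB') : WTen IA' OA IB' OB IA OA' IB OB' :=
  fun ia' _ ib' ob ia oa' ib ob' => (∑ j, W ia' j ib' ob ia oa' ib ob') / (Fintype.card OA : ℝ)

/-- Reduce-and-replace over the index `IB'`. -/
def rrIB' (W : WTen IA' OA IB' OB IA OA' IB OB') : WTen IA' OA IB' OB IA OA' IB OB' :=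
  fun ia' oa _ ob ia oa' ib ob' => (∑ j, W ia' oa j ob ia oa' ib ob') / (Fintype.card IB' : ℝ)

/-- Reduce-and-replace over the index `OB`. -/
def rrOB (W : WTen IA' OA IB' OB IA OA' IB OB') : WTen IA' OA IB' OB IA OA' IB OB' :=
  fun ia' oa ib' _ ia oa' ib ob' => (∑ j, W ia' oa ib' j ia oa' ib ob') / (Fintype.card OB : ℝ)

/-- Reduce-and-replace over the index `IA`. -/
def rrIA (W : WTen IA' OA IB' OB IA OA' IB OB') : WTen IA' OA IB' OB IA OA' IB OB' :=
  fun ia' oa ib' ob _ oa' ib ob' => (∑ j, W ia' oa ib' ob j oa' ib ob') / (Fintype.card IA : ℝ)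

/-- Reduce-and-replace over the index `OA'`. -/
def rrOA' (W : WTen IA' OA IB' OB IA OA' IB OB') : WTen IA' OA IB' OB IA OA' IB OB' :=
  fun ia' oa ib' ob ia _ ib ob' => (∑ j, W ia' oa ib' ob ia j ib ob') / (Fintype.card OA' : ℝ)

/-- Reduce-and-replace over the index `IB`. -/
def rrIB (W : WTen IA' OA IB' OB IA OA' IB OB') : WTen IA' OA IB' OB IA OA' IB OB' :=
  fun ia' oa ib' ob ia oa' _ ob' => (∑ j, W ia' oa ib' ob ia oa' j ob') / (Fintype.card IB : ℝ)

/-- Reduce-and-replace over the index `OB'`. -/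
def rrOB' (W : WTen IA' OA IB' OB IA OA' IB OB') : WTen IA' OA IB' OB IA OA' IB OB' :=
  fun ia' oa ib' ob ia oa' ib _ => (∑ j, W ia' oa ib' ob ia oa' ib j) / (Fintype.card OB' : ℝ)

/-- Total reduction `r(W)`: the sum of all entries of `W`. -/
def tot (W : WTen IA' OA IB' OB IA OA' IB OB') : ℝ :=
  ∑ ia', ∑ oa, ∑ ib', ∑ ob, ∑ ia, ∑ oa', ∑ ib, ∑ ob', W ia' oa ib' ob ia oa' ib ob'

/-- Elementwise nonnegativity `W ≥ 0`. -/
def Nonneg8 (W : WTen IA' OA IB' OB IA OA' IB OB') : Prop :=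
  ∀ ia' oa ib' ob ia oa' ib ob', 0 ≤ W ia' oa ib' ob ia oa' ib ob'

/-- Reduce-and-replace over all of Alice's indices `𝔸 = I'_A I_A O_A O'_A`. -/
def rrA (W : WTen IA' OA IB' OB IA OA' IB OB') : WTen IA' OA IB' OB IA OA' IB OB' :=
  rrIA' (rrIA (rrOA (rrOA' W)))

/-- Reduce-and-replace over all of Bob's indices `𝔹 = I'_B I_B O_B O'_B`. -/
def rrB (W : WTen IA' OA IB' OB IA OA' IB OB') : WTen IA' OA IB' OB IA OA' IB OB' :=
  rrIB' (rrIB (rrOB (rrOB' W)))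

/-- The combination `_{(1 − O'_A + O_A O'_A − I_A O_A O'_A)}W`. -/
def LA (W : WTen IA' OA IB' OB IA OA' IB OB') : WTen IA' OA IB' OB IA OA' IB OB' :=
  W - rrOA' W + rrOA (rrOA' W) - rrIA (rrOA (rrOA' W))

/-- The combination `_{(1 − O'_B + O_B O'_B − I_B O_B O'_B)}W`. -/
def LB (W : WTen IA' OA IB' OB IA OA' IB OB') : WTen IA' OA IB' OB IA OA' IB OB' :=
  W - rrOB' W + rrOB (rrOB' W) - rrIB (rrOB (rrOB' W))

/-- A bipartite process tensor. -/
def IsProcessTensor (W : WTen IA' OA IB' OB IA OA' IB OB') : Prop :=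
  Nonneg8 W ∧
  tot W = (Fintype.card IA : ℝ) * (Fintype.card OA' : ℝ) *
      (Fintype.card IB : ℝ) * (Fintype.card OB' : ℝ) ∧
  rrA (LB W) = 0 ∧
  rrB (LA W) = 0 ∧
  LA (LB W) = 0

/-- Reduce-and-replace over all primed indices `O'_A O'_B I'_A I'_B`. -/
def rrPrimes (W : WTen IA' OA IB' OB IA OA' IB OB') : WTen IA' OA IB' OB IA OA' IB OB' :=
  rrOA' (rrOB' (rrIA' (rrIB' W)))

/-- The combination `_{(1 − O'_A + O'_A I'_A − O'_B O'_A I'_A)}W`. -/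
def MA (W : WTen IA' OA IB' OB IA OA' IB OB') : WTen IA' OA IB' OB IA OA' IB OB' :=
  W - rrOA' W + rrIA' (rrOA' W) - rrOB' (rrIA' (rrOA' W))

/-- The combination `_{(1 − O'_B + O'_B I'_B − O'_A O'_B I'_B)}W`. -/
def MB (W : WTen IA' OA IB' OB IA OA' IB OB') : WTen IA' OA IB' OB IA OA' IB OB' :=
  W - rrOB' W + rrIB' (rrOB' W) - rrOA' (rrIB' (rrOB' W))

/-- The four nonsignaling-preservation (NSP) conditions. -/
def SatisfiesNSP (W : WTen IA' OA IB' OB IA OA' IB OB') : Prop :=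
  rrOA (rrPrimes W) = rrIA (rrOA (rrPrimes W)) ∧
  rrOB (rrPrimes W) = rrIB (rrOB (rrPrimes W)) ∧
  rrOA (MA W) = rrIA (rrOA (MA W)) ∧
  rrOB (MB W) = rrIB (rrOB (MB W))

/-- A boxworld process. -/
def IsBoxworldProcess (W : WTen IA' OA IB' OB IA OA' IB OB') : Prop :=
  Nonneg8 W ∧
  tot W = (Fintype.card IA : ℝ) * (Fintype.card OA' : ℝ) *
      (Fintype.card IB : ℝ) * (Fintype.card OB' : ℝ) ∧
  rrA W = rrOB' (rrA W) ∧
  rrB W = rrOA' (rrB W) ∧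
  W = rrOA' W + rrOB' W - rrOA' (rrOB' W) ∧
  rrOA W = rrIA (rrOA W) ∧
  rrOB W = rrIB (rrOB W)

/-- The action `W * P` of a process tensor on a bipartite box
`P(o'_A, o'_B | i'_A, i'_B)`, contracting the indices `O'_A, O'_B, I'_A, I'_B`. -/
def actOnBox (W : WTen IA' OA IB' OB IA OA' IB OB')
    (P : OA' → OB' → IA' → IB' → ℝ) : OA → OB → IA → IB → ℝ :=
  fun oa ob ia ib =>
    ∑ ia', ∑ ib', ∑ oa', ∑ ob', W ia' oa ib' ob ia oa' ib ob' * P oa' ob' ia' ib'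

end WireDefs

section OpDefs

variable {I' O I O' : Type}
variable [Fintype I'] [Fintype O] [Fintype I] [Fintype O']

/-- Reduce-and-replace over the index `I'` of an operation tensor. -/
def rrOpI' (T : OpTen I' O I O') : OpTen I' O I O' :=
  fun _ o i o' => (∑ j, T j o i o') / (Fintype.card I' : ℝ)

/-- Reduce-and-replace over the index `O` of an operation tensor. -/
def rrOpO (T : OpTen I' O I O') : OpTen I' O I O' :=
  fun i' _ i o' => (∑ j, T i' j i o') / (Fintype.card O : ℝ)

/-- Reduce-and-replace over the index `I` of an operation tensor. -/
def rrOpI (T : OpTen I' O I O') : OpTen I' O I O' :=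
  fun i' o _ o' => (∑ j, T i' o j o') / (Fintype.card I : ℝ)

/-- Reduce-and-replace over the index `O'` of an operation tensor. -/
def rrOpO' (T : OpTen I' O I O') : OpTen I' O I O' :=
  fun i' o i _ => (∑ j, T i' o i j) / (Fintype.card O' : ℝ)

/-- Total reduction of an operation tensor. -/
def totOp (T : OpTen I' O I O') : ℝ := ∑ i', ∑ o, ∑ i, ∑ o', T i' o i o'

/-- A deterministic local operation. -/
def IsDetOp (T : OpTen I' O I O') : Prop :=
  totOp T = (Fintype.card I' : ℝ) * (Fintype.card O : ℝ) ∧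
  rrOpI (rrOpO' T) = rrOpI' (rrOpI (rrOpO (rrOpO' T))) ∧
  rrOpO' T = rrOpO (rrOpO' T)

/-- A set of probabilistic local operations `T^{a|x}(i, o' | i', o)`:
nonnegative tensors whose sum over the classical outcome `a` is, for each
classical input `x`, a deterministic local operation. -/
def IsLocalOps {A X : Type} [Fintype A] (T : A → X → OpTen I' O I O') : Prop :=
  (∀ a x i' o i o', 0 ≤ T a x i' o i o') ∧
  ∀ x, IsDetOp (fun i' o i o' => ∑ a, T a x i' o i o')

/-- A nonsignaling set of probabilistic local operations: either the
deterministic operation `T^x` is independent of `x` (case 1), or it is a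
convex combination of deterministic pre-processings `f_λ` (possibly depending
on `x`) and post-processings `g_λ` independent of both the box output and `x`
(case 2). -/
def IsNSLocalOps {A X : Type} [Fintype A] (T : A → X → OpTen I' O I O') : Prop :=
  IsLocalOps T ∧
  ((∀ x x' i' o i o', (∑ a, T a x i' o i o') = ∑ a, T a x' i' o i o') ∨
    ∃ (m : ℕ) (π : Fin m → ℝ) (f : Fin m → I' → X → I) (g : Fin m → I' → O'),
      (∀ l, 0 ≤ π l) ∧ (∑ l, π l = 1) ∧
      ∀ x i' o i o', (∑ a, T a x i' o i o') =
        ∑ l, π l * ((if i = f l i' x then (1 : ℝ) else 0) *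
          (if o' = g l i' then (1 : ℝ) else 0)))

end OpDefs

/-- A bipartite nonsignaling box `P(o_1, o_2 | i_1, i_2)`. -/
def IsNSBox {O1 O2 I1 I2 : Type} [Fintype O1] [Fintype O2]
    (P : O1 → O2 → I1 → I2 → ℝ) : Prop :=
  (∀ o1 o2 i1 i2, 0 ≤ P o1 o2 i1 i2) ∧
  (∀ i1 i2, ∑ o1, ∑ o2, P o1 o2 i1 i2 = 1) ∧
  (∀ o1 i1 i2 i2', ∑ o2, P o1 o2 i1 i2 = ∑ o2, P o1 o2 i1 i2') ∧
  (∀ o2 i1 i1' i2, ∑ o1, P o1 o2 i1 i2 = ∑ o1, P o1 o2 i1' i2)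

section Corr

variable {IA' OA IB' OB IA OA' IB OB' : Type}
variable [Fintype IA'] [Fintype OA] [Fintype IB'] [Fintype OB]
variable [Fintype IA] [Fintype OA'] [Fintype IB] [Fintype OB']
variable {A X B Y : Type}

/-- The correlations `(T^{A|X} ⊗ T^{B|Y}) * W` generated by local operations
acting on a process tensor: contraction over all eight wire indices. -/
def corr (TA : A → X → OpTen IA' OA IA OA') (TB : B → Y → OpTen IB' OB IB OB')
    (W : WTen IA' OA IB' OB IA OA' IB OB') (a : A) (b : B) (x : X) (y : Y) : ℝ :=
  ∑ ia', ∑ oa, ∑ ib', ∑ ob, ∑ ia, ∑ oa', ∑ ib, ∑ ob',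
    TA a x ia' oa ia oa' * TB b y ib' ob ib ob' * W ia' oa ib' ob ia oa' ib ob'

end Corr

section Aux

lemma sum_rot3 {α β γ : Type*} [Fintype α] [Fintype β] [Fintype γ] (f : α → β → γ → ℝ) :
    (∑ a, ∑ b, ∑ c, f a b c) = ∑ b, ∑ c, ∑ a, f a b c :=
  Finset.sum_comm.trans (Finset.sum_congr rfl fun _ _ => Finset.sum_comm)

lemma sum_rot4 {α β γ δ : Type*} [Fintype α] [Fintype β] [Fintype γ] [Fintype δ]
    (f : α → β → γ → δ → ℝ) :
    (∑ a, ∑ b, ∑ c, ∑ d, f a b c d) = ∑ b, ∑ c, ∑ d, ∑ a, f a b c d :=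
  Finset.sum_comm.trans (Finset.sum_congr rfl fun _ _ => sum_rot3 _)

lemma sum_rot5 {α β γ δ ε : Type*} [Fintype α] [Fintype β] [Fintype γ] [Fintype δ] [Fintype ε]
    (f : α → β → γ → δ → ε → ℝ) :
    (∑ a, ∑ b, ∑ c, ∑ d, ∑ e, f a b c d e) = ∑ b, ∑ c, ∑ d, ∑ e, ∑ a, f a b c d e :=
  Finset.sum_comm.trans (Finset.sum_congr rfl fun _ _ => sum_rot4 _)

end Aux

section DeltaOps

variable {I' O I O' : Type}
variable [Fintype I'] [Fintype O] [Fintype I] [Fintype O']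

/-- Full-information delta operation. -/
def deltaOp (i0 : I) (o0 : O') : (I' × O) → PUnit → OpTen I' O I O' :=
  fun p _ i' o i o' =>
    (if i' = p.1 then (1:ℝ) else 0) * (if o = p.2 then 1 else 0) *
      (if i = i0 then 1 else 0) * (if o' = o0 then 1 else 0)

/-- Wiring operation determined by `f, g`. -/
def fgOp : PUnit → ((I' → I) × (I' → O → O')) → OpTen I' O I O' :=
  fun _ q i' o i o' => (if i = q.1 i' then (1:ℝ) else 0) * (if o' = q.2 i' o then 1 else 0)

variable [Nonempty I'] [Nonempty O] [Nonempty I] [Nonempty O']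

lemma isDetOp_delta (i0 : I) (o0 : O') :
    IsDetOp (I' := I') (O := O) (fun i' o i o' => (if i = i0 then (1:ℝ) else 0) * (if o' = o0 then 1 else 0)) := by
  have hdI : (Fintype.card I : ℝ) ≠ 0 := Nat.cast_ne_zero.mpr Fintype.card_ne_zero
  have hdI' : (Fintype.card I' : ℝ) ≠ 0 := Nat.cast_ne_zero.mpr Fintype.card_ne_zero
  have hdO : (Fintype.card O : ℝ) ≠ 0 := Nat.cast_ne_zero.mpr Fintype.card_ne_zero
  have hdO' : (Fintype.card O' : ℝ) ≠ 0 := Nat.cast_ne_zero.mpr Fintype.card_ne_zero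
  refine ⟨?_, ?_, ?_⟩
  · simp [totOp, mul_ite, ite_mul, mul_one, one_mul, mul_zero, zero_mul,
      Finset.sum_ite_eq', Finset.mem_univ, Finset.sum_const, Finset.card_univ, nsmul_eq_mul]
  · funext i' o i o'
    simp only [rrOpI, rrOpI', rrOpO, rrOpO', mul_ite, ite_mul, mul_one, one_mul, mul_zero,
      zero_mul, Finset.sum_ite_eq', Finset.mem_univ, if_true, Finset.sum_const,
      Finset.card_univ, nsmul_eq_mul, Finset.sum_div, div_eq_mul_inv]
    field_simp
    try ring
    try (split_ifs <;> field_simp <;> try ring)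
  · funext i' o i o'
    simp only [rrOpO, rrOpO', mul_ite, ite_mul, mul_one, one_mul, mul_zero,
      zero_mul, Finset.sum_ite_eq', Finset.mem_univ, if_true, Finset.sum_const,
      Finset.card_univ, nsmul_eq_mul, Finset.sum_div, div_eq_mul_inv]
    field_simp
    try ring
    try (split_ifs <;> field_simp <;> try ring)

lemma deltaOp_local (i0 : I) (o0 : O') : IsLocalOps (deltaOp (I' := I') (O := O) i0 o0) := by
  constructor
  · intro a x i' o i o'
    simp only [deltaOp]
    split_ifs <;> norm_num
  · intro x
    have : (fun i' o i o' => ∑ a : I' × O, deltaOp i0 o0 a x i' o i o') =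
        fun i' o i o' => (if i = i0 then (1:ℝ) else 0) * (if o' = o0 then 1 else 0) := by
      funext i' o i o'
      simp [deltaOp, Fintype.sum_prod_type, mul_ite, ite_mul, mul_one, one_mul, mul_zero,
        zero_mul, Finset.sum_ite_eq, Finset.mem_univ]
    rw [this]
    exact isDetOp_delta i0 o0

lemma isDetOp_fg (f : I' → I) (g : I' → O → O') :
    IsDetOp (fun i' o i o' => (if i = f i' then (1:ℝ) else 0) * (if o' = g i' o then 1 else 0)) := by
  have hdI : (Fintype.card I : ℝ) ≠ 0 := Nat.cast_ne_zero.mpr Fintype.card_ne_zero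
  have hdI' : (Fintype.card I' : ℝ) ≠ 0 := Nat.cast_ne_zero.mpr Fintype.card_ne_zero
  have hdO : (Fintype.card O : ℝ) ≠ 0 := Nat.cast_ne_zero.mpr Fintype.card_ne_zero
  have hdO' : (Fintype.card O' : ℝ) ≠ 0 := Nat.cast_ne_zero.mpr Fintype.card_ne_zero
  refine ⟨?_, ?_, ?_⟩
  · simp [totOp, mul_ite, ite_mul, mul_one, one_mul, mul_zero, zero_mul,
      Finset.sum_ite_eq', Finset.mem_univ, Finset.sum_const, Finset.card_univ, nsmul_eq_mul]
  · funext i' o i o'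
    simp only [rrOpI, rrOpI', rrOpO, rrOpO', mul_ite, ite_mul, mul_one, one_mul, mul_zero,
      zero_mul, Finset.sum_ite_eq', Finset.mem_univ, if_true, Finset.sum_const,
      Finset.card_univ, nsmul_eq_mul, Finset.sum_div, div_eq_mul_inv]
    field_simp
    try ring
    try (split_ifs <;> field_simp <;> try ring)
  · funext i' o i o'
    simp only [rrOpO, rrOpO', mul_ite, ite_mul, mul_one, one_mul, mul_zero,
      zero_mul, Finset.sum_ite_eq', Finset.mem_univ, if_true, Finset.sum_const,
      Finset.card_univ, nsmul_eq_mul, Finset.sum_div, div_eq_mul_inv]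
    field_simp
    try ring
    try (split_ifs <;> field_simp <;> try ring)

lemma fgOp_local : IsLocalOps (fgOp (I' := I') (O := O) (I := I) (O' := O')) := by
  constructor
  · intro a x i' o i o'
    simp only [fgOp]
    split_ifs <;> norm_num
  · intro x
    have : (fun i' o i o' => ∑ a : PUnit, fgOp a x i' o i o') =
        fun i' o i o' => (if i = x.1 i' then (1:ℝ) else 0) * (if o' = x.2 i' o then 1 else 0) := by
      funext i' o i o'
      simp [fgOp]
    rw [this]
    exact isDetOp_fg x.1 x.2

end DeltaOps

section CorrEval

variable {IA' OA IB' OB IA OA' IB OB' : Type}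
variable [Fintype IA'] [Fintype OA] [Fintype IB'] [Fintype OB]
variable [Fintype IA] [Fintype OA'] [Fintype IB] [Fintype OB']

lemma corr_delta_fg (W : WTen IA' OA IB' OB IA OA' IB OB') (ia0 : IA) (oa0 : OA')
    (j : IA') (k : OA) (f : IB' → IB) (g : IB' → OB → OB') :
    corr (deltaOp ia0 oa0) fgOp W (j, k) PUnit.unit PUnit.unit (f, g) =
      ∑ u, ∑ v, W j k u v ia0 oa0 (f u) (g u v) := by
  simp [corr, deltaOp, fgOp, mul_ite, ite_mul, mul_one, one_mul, mul_zero, zero_mul,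
    Finset.sum_ite_eq', Finset.mem_univ, ← Finset.mul_sum]

end CorrEval

section DetFacts

variable {I' O I O' : Type}
variable [Fintype I'] [Fintype O] [Fintype I] [Fintype O']
variable [Nonempty I'] [Nonempty O] [Nonempty I] [Nonempty O']

lemma detOp_sumO'_indep {T : OpTen I' O I O'} (h : IsDetOp T) (i' : I') (o1 o2 : O) (i : I) :
    (∑ o', T i' o1 i o') = ∑ o', T i' o2 i o' := by
  have hdO' : (Fintype.card O' : ℝ) ≠ 0 := Nat.cast_ne_zero.mpr Fintype.card_ne_zero
  have h3 := h.2.2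
  have e1 := congrFun (congrFun (congrFun (congrFun h3 i') o1) i) (Classical.arbitrary O')
  have e2 := congrFun (congrFun (congrFun (congrFun h3 i') o2) i) (Classical.arbitrary O')
  simp only [rrOpO', rrOpO] at e1 e2
  have e := e1.trans e2.symm
  have := (div_eq_div_iff hdO' hdO').mp e
  exact mul_right_cancel₀ hdO' this

lemma detOp_norm {T : OpTen I' O I O'} (h : IsDetOp T) (i' : I') (o : O) :
    (∑ i, ∑ o', T i' o i o') = 1 := by
  have hdI : (Fintype.card I : ℝ) ≠ 0 := Nat.cast_ne_zero.mpr Fintype.card_ne_zero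
  have hdI' : (Fintype.card I' : ℝ) ≠ 0 := Nat.cast_ne_zero.mpr Fintype.card_ne_zero
  have hdO : (Fintype.card O : ℝ) ≠ 0 := Nat.cast_ne_zero.mpr Fintype.card_ne_zero
  have hdO' : (Fintype.card O' : ℝ) ≠ 0 := Nat.cast_ne_zero.mpr Fintype.card_ne_zero
  have hsum : (∑ j' : I', ∑ i, ∑ o', T j' o i o') = (Fintype.card I' : ℝ) := by
    have htot : (∑ j' : I', ∑ o2 : O, ∑ i, ∑ o', T j' o2 i o')
        = (Fintype.card I' : ℝ) * (Fintype.card O : ℝ) := h.1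
    have hrow : ∀ j', (∑ o2 : O, ∑ i, ∑ o', T j' o2 i o')
        = (Fintype.card O : ℝ) * (∑ i, ∑ o', T j' o i o') := by
      intro j'
      rw [Finset.sum_congr rfl fun o2 _ =>
        Finset.sum_congr rfl fun i _ => detOp_sumO'_indep h j' o2 o i]
      simp [Finset.sum_const, Finset.card_univ, nsmul_eq_mul]
    rw [Finset.sum_congr rfl fun j' _ => hrow j', ← Finset.mul_sum] at htot
    have := mul_left_cancel₀ hdO (htot.trans (mul_comm _ _))
    exact this
  have h2 := h.2.1
  rw [← h.2.2] at h2
  have e := congrFun (congrFun (congrFun (congrFun h2 i') o) (Classical.arbitrary I))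
    (Classical.arbitrary O')
  simp only [rrOpI, rrOpI', rrOpO', ← Finset.sum_div] at e
  rw [hsum] at e
  field_simp at e
  have hK : (Fintype.card O' : ℝ) * (Fintype.card I) * (Fintype.card I') ≠ 0 :=
    mul_ne_zero (mul_ne_zero hdO' hdI) hdI'
  have e' : (∑ i, ∑ o', T i' o i o') * ((Fintype.card O' : ℝ) * (Fintype.card I) * (Fintype.card I'))
      = 1 * ((Fintype.card O' : ℝ) * (Fintype.card I) * (Fintype.card I')) := by
    linear_combination ((Fintype.card O' : ℝ) * (Fintype.card I) * (Fintype.card I')) * e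
  exact mul_right_cancel₀ hK e'
end DetFacts

section RotMore

lemma sum_rot6 {α1 α2 α3 α4 α5 α6 : Type*} [Fintype α1] [Fintype α2] [Fintype α3]
    [Fintype α4] [Fintype α5] [Fintype α6] (f : α1 → α2 → α3 → α4 → α5 → α6 → ℝ) :
    (∑ a, ∑ b, ∑ c, ∑ d, ∑ e, ∑ x, f a b c d e x)
      = ∑ b, ∑ c, ∑ d, ∑ e, ∑ x, ∑ a, f a b c d e x :=
  Finset.sum_comm.trans (Finset.sum_congr rfl fun _ _ => sum_rot5 _)

lemma sum_rot7 {α1 α2 α3 α4 α5 α6 α7 : Type*} [Fintype α1] [Fintype α2] [Fintype α3]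
    [Fintype α4] [Fintype α5] [Fintype α6] [Fintype α7]
    (f : α1 → α2 → α3 → α4 → α5 → α6 → α7 → ℝ) :
    (∑ a, ∑ b, ∑ c, ∑ d, ∑ e, ∑ x, ∑ u, f a b c d e x u)
      = ∑ b, ∑ c, ∑ d, ∑ e, ∑ x, ∑ u, ∑ a, f a b c d e x u :=
  Finset.sum_comm.trans (Finset.sum_congr rfl fun _ _ => sum_rot6 _)

lemma sum_rot8 {α1 α2 α3 α4 α5 α6 α7 α8 : Type*} [Fintype α1] [Fintype α2] [Fintype α3]
    [Fintype α4] [Fintype α5] [Fintype α6] [Fintype α7] [Fintype α8]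
    (f : α1 → α2 → α3 → α4 → α5 → α6 → α7 → α8 → ℝ) :
    (∑ a, ∑ b, ∑ c, ∑ d, ∑ e, ∑ x, ∑ u, ∑ v, f a b c d e x u v)
      = ∑ b, ∑ c, ∑ d, ∑ e, ∑ x, ∑ u, ∑ v, ∑ a, f a b c d e x u v :=
  Finset.sum_comm.trans (Finset.sum_congr rfl fun _ _ => sum_rot7 _)

lemma sum_rot9 {α1 α2 α3 α4 α5 α6 α7 α8 α9 : Type*} [Fintype α1] [Fintype α2] [Fintype α3]
    [Fintype α4] [Fintype α5] [Fintype α6] [Fintype α7] [Fintype α8] [Fintype α9]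
    (f : α1 → α2 → α3 → α4 → α5 → α6 → α7 → α8 → α9 → ℝ) :
    (∑ a, ∑ b, ∑ c, ∑ d, ∑ e, ∑ x, ∑ u, ∑ v, ∑ w, f a b c d e x u v w)
      = ∑ b, ∑ c, ∑ d, ∑ e, ∑ x, ∑ u, ∑ v, ∑ w, ∑ a, f a b c d e x u v w :=
  Finset.sum_comm.trans (Finset.sum_congr rfl fun _ _ => sum_rot8 _)

end RotMore

section OneSided

variable {IA' OA IB' OB IA OA' IB OB' : Type}
variable [Fintype IA'] [Fintype OA] [Fintype IB'] [Fintype OB]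
variable [Fintype IA] [Fintype OA'] [Fintype IB] [Fintype OB']
variable [Nonempty IA'] [Nonempty OA] [Nonempty IB'] [Nonempty OB]
variable [Nonempty IA] [Nonempty OA'] [Nonempty IB] [Nonempty OB']

lemma sumb_corr_canon {A X B Y : Type} [Fintype A] [Fintype B]
    (W : WTen IA' OA IB' OB IA OA' IB OB')
    (h7 : rrOB W = rrIB (rrOB W)) (hWO : W = rrOB' W)
    (TA : A → X → OpTen IA' OA IA OA') (TB : B → Y → OpTen IB' OB IB OB')
    (hTB : IsLocalOps TB) (a : A) (x : X) (y : Y) :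
    (∑ b, corr TA TB W a b x y) =
      ∑ ia', ∑ oa, ∑ ib', ∑ ia, ∑ oa', TA a x ia' oa ia oa' *
        ∑ ob, W ia' oa ib' ob ia oa' (Classical.arbitrary IB) (Classical.arbitrary OB') := by
  have hdet := hTB.2 y
  set ibf := Classical.arbitrary IB with hibf
  set obf' := Classical.arbitrary OB' with hobf'
  set obf := Classical.arbitrary OB with hobf
  have hOB : ∀ ia' oa ib' ob ia oa' ib ob'1 ob'2,
      W ia' oa ib' ob ia oa' ib ob'1 = W ia' oa ib' ob ia oa' ib ob'2 := by
    intro ia' oa ib' ob ia oa' ib ob'1 ob'2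
    have e1 := congrFun (congrFun (congrFun (congrFun (congrFun (congrFun (congrFun
      (congrFun hWO ia') oa) ib') ob) ia) oa') ib) ob'1
    have e2 := congrFun (congrFun (congrFun (congrFun (congrFun (congrFun (congrFun
      (congrFun hWO ia') oa) ib') ob) ia) oa') ib) ob'2
    simp only [rrOB'] at e1 e2
    exact e1.trans e2.symm
  have hQ : ∀ ia' oa ib' ia oa' ib, (∑ ob, W ia' oa ib' ob ia oa' ib obf')
      = ∑ ob, W ia' oa ib' ob ia oa' ibf obf' := by
    intro ia' oa ib' ia oa' ib
    have hdOB : (Fintype.card OB : ℝ) ≠ 0 := Nat.cast_ne_zero.mpr Fintype.card_ne_zero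
    have e1 := congrFun (congrFun (congrFun (congrFun (congrFun (congrFun (congrFun
      (congrFun h7 ia') oa) ib') obf) ia) oa') ib) obf'
    have e2 := congrFun (congrFun (congrFun (congrFun (congrFun (congrFun (congrFun
      (congrFun h7 ia') oa) ib') obf) ia) oa') ibf) obf'
    simp only [rrOB, rrIB] at e1 e2
    have e := e1.trans e2.symm
    have := (div_eq_div_iff hdOB hdOB).mp e
    exact mul_right_cancel₀ hdOB this
  have hS : ∀ ib' ob ib, (∑ ob', ∑ b, TB b y ib' ob ib ob')
      = ∑ ob', ∑ b, TB b y ib' obf ib ob' :=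
    fun ib' ob ib => detOp_sumO'_indep hdet ib' ob obf ib
  have hnorm : ∀ ib', (∑ ib, ∑ ob', ∑ b, TB b y ib' obf ib ob') = 1 :=
    fun ib' => detOp_norm hdet ib' obf
  calc (∑ b, corr TA TB W a b x y)
      = ∑ ia', ∑ oa, ∑ ib', ∑ ob, ∑ ia, ∑ oa', ∑ ib, ∑ ob', ∑ b,
          TA a x ia' oa ia oa' * TB b y ib' ob ib ob' * W ia' oa ib' ob ia oa' ib ob' := by
        simp only [corr]; exact sum_rot9 _
    _ = ∑ ia', ∑ oa, ∑ ib', ∑ ob, ∑ ia, ∑ oa', ∑ ib,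
          (TA a x ia' oa ia oa' * (∑ ob', ∑ b, TB b y ib' obf ib ob')) *
            W ia' oa ib' ob ia oa' ib obf' := by
        refine Finset.sum_congr rfl fun ia' _ => Finset.sum_congr rfl fun oa _ => ?_
        refine Finset.sum_congr rfl fun ib' _ => Finset.sum_congr rfl fun ob _ => ?_
        refine Finset.sum_congr rfl fun ia _ => Finset.sum_congr rfl fun oa' _ => ?_
        refine Finset.sum_congr rfl fun ib _ => ?_
        rw [← hS ib' ob ib]
        have hterm : ∀ ob' : OB', ∀ b : B,
            TA a x ia' oa ia oa' * TB b y ib' ob ib ob' * W ia' oa ib' ob ia oa' ib ob'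
              = TA a x ia' oa ia oa' * TB b y ib' ob ib ob' * W ia' oa ib' ob ia oa' ib obf' :=
          fun ob' b => by rw [hOB ia' oa ib' ob ia oa' ib ob' obf']
        rw [Finset.sum_congr rfl fun ob' _ => Finset.sum_congr rfl fun b _ => hterm ob' b]
        simp only [← Finset.sum_mul, ← Finset.mul_sum]
    _ = ∑ ia', ∑ oa, ∑ ib', ∑ ia, ∑ oa', ∑ ib, ∑ ob,
          (TA a x ia' oa ia oa' * (∑ ob', ∑ b, TB b y ib' obf ib ob')) *
            W ia' oa ib' ob ia oa' ib obf' := by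
        refine Finset.sum_congr rfl fun ia' _ => Finset.sum_congr rfl fun oa _ => ?_
        refine Finset.sum_congr rfl fun ib' _ => ?_
        exact sum_rot4 _
    _ = ∑ ia', ∑ oa, ∑ ib', ∑ ia, ∑ oa', ∑ ib,
          (TA a x ia' oa ia oa' * (∑ ob', ∑ b, TB b y ib' obf ib ob')) *
            (∑ ob, W ia' oa ib' ob ia oa' ibf obf') := by
        refine Finset.sum_congr rfl fun ia' _ => Finset.sum_congr rfl fun oa _ => ?_
        refine Finset.sum_congr rfl fun ib' _ => Finset.sum_congr rfl fun ia _ => ?_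
        refine Finset.sum_congr rfl fun oa' _ => Finset.sum_congr rfl fun ib _ => ?_
        rw [← Finset.mul_sum, hQ ia' oa ib' ia oa' ib]
    _ = ∑ ia', ∑ oa, ∑ ib', ∑ ia, ∑ oa', TA a x ia' oa ia oa' *
          ∑ ob, W ia' oa ib' ob ia oa' ibf obf' := by
        refine Finset.sum_congr rfl fun ia' _ => Finset.sum_congr rfl fun oa _ => ?_
        refine Finset.sum_congr rfl fun ib' _ => Finset.sum_congr rfl fun ia _ => ?_
        refine Finset.sum_congr rfl fun oa' _ => ?_
        rw [← Finset.sum_mul, ← Finset.mul_sum, hnorm ib', mul_one]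

lemma oneSided (W : WTen IA' OA IB' OB IA OA' IB OB') (h7 : rrOB W = rrIB (rrOB W)) :
    (∀ (X A Y B : Type) [Fintype X] [Nonempty X] [Fintype A] [Nonempty A]
        [Fintype Y] [Nonempty Y] [Fintype B] [Nonempty B]
        (TA : A → X → OpTen IA' OA IA OA') (TB : B → Y → OpTen IB' OB IB OB'),
        IsLocalOps TA → IsLocalOps TB →
        ∀ a x y y', ∑ b, corr TA TB W a b x y = ∑ b, corr TA TB W a b x y') ↔
      W = rrOB' W := by
  constructor
  · intro H
    have key : ∀ ia' oa ib' ob ia oa' ib ob'1 ob'2,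
        W ia' oa ib' ob ia oa' ib ob'1 = W ia' oa ib' ob ia oa' ib ob'2 := by
      intro ia' oa ib'0 ob0 ia0 oa0 ib0 w1 w2
      have hH := H PUnit (IA' × OA) ((IB' → IB) × (IB' → OB → OB')) PUnit
        (deltaOp ia0 oa0) fgOp (deltaOp_local ia0 oa0) fgOp_local
        (ia', oa) PUnit.unit
        (fun _ => ib0, fun u v => if u = ib'0 ∧ v = ob0 then w1 else w2)
        (fun _ => ib0, fun _ _ => w2)
      simp only [Finset.univ_unique, Finset.sum_singleton] at hH
      rw [corr_delta_fg, corr_delta_fg] at hH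
      have hdiff : (∑ u, ∑ v, (W ia' oa u v ia0 oa0 ib0
            (if u = ib'0 ∧ v = ob0 then w1 else w2) - W ia' oa u v ia0 oa0 ib0 w2)) = 0 := by
        simp only [Finset.sum_sub_distrib]
        exact sub_eq_zero_of_eq hH
      have hsingle : (∑ u, ∑ v, (W ia' oa u v ia0 oa0 ib0
            (if u = ib'0 ∧ v = ob0 then w1 else w2) - W ia' oa u v ia0 oa0 ib0 w2))
          = W ia' oa ib'0 ob0 ia0 oa0 ib0 w1 - W ia' oa ib'0 ob0 ia0 oa0 ib0 w2 := by
        rw [Finset.sum_eq_single ib'0]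
        · rw [Finset.sum_eq_single ob0]
          · simp
          · intro v _ hv
            rw [if_neg (by tauto)]
            ring
          · intro hmem; exact absurd (Finset.mem_univ ob0) hmem
        · intro u _ hu
          apply Finset.sum_eq_zero
          intro v _
          rw [if_neg (by tauto)]
          ring
        · intro hmem; exact absurd (Finset.mem_univ ib'0) hmem
      have := hsingle.symm.trans hdiff
      linarith [this]
    funext ia' oa ib' ob ia oa' ib ob'
    have hd : (Fintype.card OB' : ℝ) ≠ 0 := Nat.cast_ne_zero.mpr Fintype.card_ne_zero
    have hsum : (∑ j, W ia' oa ib' ob ia oa' ib j)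
        = (Fintype.card OB' : ℝ) * W ia' oa ib' ob ia oa' ib ob' := by
      rw [Finset.sum_congr rfl fun j _ => key ia' oa ib' ob ia oa' ib j ob']
      simp [Finset.sum_const, Finset.card_univ, nsmul_eq_mul]
    show W ia' oa ib' ob ia oa' ib ob' = rrOB' W ia' oa ib' ob ia oa' ib ob'
    simp only [rrOB']
    rw [hsum, mul_comm, mul_div_assoc, div_self hd, mul_one]
  · intro hWO X A Y B _ _ _ _ _ _ _ _ TA TB hTA hTB a x y y'
    rw [sumb_corr_canon W h7 hWO TA TB hTB a x y,
      sumb_corr_canon W h7 hWO TA TB hTB a x y']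

end OneSided

section Swap

variable {IA' OA IB' OB IA OA' IB OB' : Type}
variable [Fintype IA'] [Fintype OA] [Fintype IB'] [Fintype OB]
variable [Fintype IA] [Fintype OA'] [Fintype IB] [Fintype OB']

/-- Interchange the roles of Alice and Bob in a process tensor. -/
def swapW (W : WTen IA' OA IB' OB IA OA' IB OB') : WTen IB' OB IA' OA IB OB' IA OA' :=
  fun ib' ob ia' oa ib ob' ia oa' => W ia' oa ib' ob ia oa' ib ob'

lemma corr_swap {A X B Y : Type} (TA : A → X → OpTen IA' OA IA OA')
    (TB : B → Y → OpTen IB' OB IB OB') (W : WTen IA' OA IB' OB IA OA' IB OB')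
    (a : A) (b : B) (x : X) (y : Y) :
    corr TA TB W a b x y = corr TB TA (swapW W) b a y x := by
  simp only [corr, swapW]
  calc (∑ ia', ∑ oa, ∑ ib', ∑ ob, ∑ ia, ∑ oa', ∑ ib, ∑ ob',
          TA a x ia' oa ia oa' * TB b y ib' ob ib ob' * W ia' oa ib' ob ia oa' ib ob')
    _ = ∑ oa, ∑ ib', ∑ ob, ∑ ia, ∑ oa', ∑ ib, ∑ ob', ∑ ia',
          TA a x ia' oa ia oa' * TB b y ib' ob ib ob' * W ia' oa ib' ob ia oa' ib ob' := sum_rot8 _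
    _ = ∑ ib', ∑ ob, ∑ ia, ∑ oa', ∑ ib, ∑ ob', ∑ ia', ∑ oa,
          TA a x ia' oa ia oa' * TB b y ib' ob ib ob' * W ia' oa ib' ob ia oa' ib ob' := sum_rot8 _
    _ = ∑ ib', ∑ ob, ∑ oa', ∑ ib, ∑ ob', ∑ ia', ∑ oa, ∑ ia,
          TA a x ia' oa ia oa' * TB b y ib' ob ib ob' * W ia' oa ib' ob ia oa' ib ob' := Finset.sum_congr rfl fun _ _ => Finset.sum_congr rfl fun _ _ => sum_rot6 _
    _ = ∑ ib', ∑ ob, ∑ ib, ∑ ob', ∑ ia', ∑ oa, ∑ ia, ∑ oa',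
          TA a x ia' oa ia oa' * TB b y ib' ob ib ob' * W ia' oa ib' ob ia oa' ib ob' := Finset.sum_congr rfl fun _ _ => Finset.sum_congr rfl fun _ _ => sum_rot6 _
    _ = ∑ ib', ∑ ob, ∑ ob', ∑ ia', ∑ oa, ∑ ib, ∑ ia, ∑ oa',
          TA a x ia' oa ia oa' * TB b y ib' ob ib ob' * W ia' oa ib' ob ia oa' ib ob' := Finset.sum_congr rfl fun _ _ => Finset.sum_congr rfl fun _ _ => sum_rot4 _
    _ = ∑ ib', ∑ ob, ∑ ia', ∑ oa, ∑ ib, ∑ ob', ∑ ia, ∑ oa',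
          TA a x ia' oa ia oa' * TB b y ib' ob ib ob' * W ia' oa ib' ob ia oa' ib ob' := Finset.sum_congr rfl fun _ _ => Finset.sum_congr rfl fun _ _ => sum_rot4 _
    _ = ∑ ib', ∑ ob, ∑ ia', ∑ oa, ∑ ib, ∑ ob', ∑ ia, ∑ oa',
          TB b y ib' ob ib ob' * TA a x ia' oa ia oa' * W ia' oa ib' ob ia oa' ib ob' := by
        refine Finset.sum_congr rfl fun _ _ => Finset.sum_congr rfl fun _ _ => ?_
        refine Finset.sum_congr rfl fun _ _ => Finset.sum_congr rfl fun _ _ => ?_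
        refine Finset.sum_congr rfl fun _ _ => Finset.sum_congr rfl fun _ _ => ?_
        refine Finset.sum_congr rfl fun _ _ => Finset.sum_congr rfl fun _ _ => ?_
        ring

end Swap

section Main

variable {IA' OA IB' OB IA OA' IB OB' : Type}
variable [Fintype IA'] [Fintype OA] [Fintype IB'] [Fintype OB]
variable [Fintype IA] [Fintype OA'] [Fintype IB] [Fintype OB']
variable [Nonempty IA'] [Nonempty OA] [Nonempty IB'] [Nonempty OB]
variable [Nonempty IA] [Nonempty OA'] [Nonempty IB] [Nonempty OB']

lemma swap_h7 (W : WTen IA' OA IB' OB IA OA' IB OB') (h6 : rrOA W = rrIA (rrOA W)) :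
    rrOB (swapW W) = rrIB (rrOB (swapW W)) := by
  funext ib' ob ia' oa ib ob' ia oa'
  have e := congrFun (congrFun (congrFun (congrFun (congrFun (congrFun (congrFun
    (congrFun h6 ia') oa) ib') ob) ia) oa') ib) ob'
  simpa [rrOB, rrIB, rrOA, rrIA, swapW] using e

lemma swap_rr (W : WTen IA' OA IB' OB IA OA' IB OB') :
    (swapW W = rrOB' (swapW W)) ↔ (W = rrOA' W) := by
  constructor
  · intro h1
    funext ia' oa ib' ob ia oa' ib ob'
    have e := congrFun (congrFun (congrFun (congrFun (congrFun (congrFun (congrFun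
      (congrFun h1 ib') ob) ia') oa) ib) ob') ia) oa'
    simpa [swapW, rrOB', rrOA'] using e
  · intro h1
    funext ib' ob ia' oa ib ob' ia oa'
    have e := congrFun (congrFun (congrFun (congrFun (congrFun (congrFun (congrFun
      (congrFun h1 ia') oa) ib') ob) ia) oa') ib) ob'
    simpa [swapW, rrOB', rrOA'] using e

end Main

theorem statement_8
    {IA' OA IB' OB IA OA' IB OB' : Type}
    [Fintype IA'] [Fintype OA] [Fintype IB'] [Fintype OB]
    [Fintype IA] [Fintype OA'] [Fintype IB] [Fintype OB']
    [Nonempty IA'] [Nonempty OA] [Nonempty IB'] [Nonempty OB]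
    [Nonempty IA] [Nonempty OA'] [Nonempty IB] [Nonempty OB']
    (W : WTen IA' OA IB' OB IA OA' IB OB') (hW : IsBoxworldProcess W) :
    ((∀ (X A Y B : Type) [Fintype X] [Nonempty X] [Fintype A] [Nonempty A]
        [Fintype Y] [Nonempty Y] [Fintype B] [Nonempty B]
        (TA : A → X → OpTen IA' OA IA OA') (TB : B → Y → OpTen IB' OB IB OB'),
        IsLocalOps TA → IsLocalOps TB →
        ∀ a x y y', ∑ b, corr TA TB W a b x y = ∑ b, corr TA TB W a b x y') ↔
      W = rrOB' W) ∧
    ((∀ (X A Y B : Type) [Fintype X] [Nonempty X] [Fintype A] [Nonempty A]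
        [Fintype Y] [Nonempty Y] [Fintype B] [Nonempty B]
        (TA : A → X → OpTen IA' OA IA OA') (TB : B → Y → OpTen IB' OB IB OB'),
        IsLocalOps TA → IsLocalOps TB →
        ∀ b y x x', ∑ a, corr TA TB W a b x y = ∑ a, corr TA TB W a b x' y) ↔
      W = rrOA' W) := by
  obtain ⟨hpos, htot, hA, hB, hM, h6, h7⟩ := hW
  constructor
  · exact oneSided W h7
  · have hOS := oneSided (swapW W) (swap_h7 W h6)
    rw [← swap_rr W]
    constructor
    · intro H
      apply hOS.mp
      intro X A Y B _ _ _ _ _ _ _ _ TA TB hTA hTB a x y y'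
      have e : ∀ (b : B) (y0 : Y), corr TA TB (swapW W) a b x y0 = corr TB TA W b a y0 x :=
        fun b y0 => corr_swap TA TB (swapW W) a b x y0
      calc (∑ b, corr TA TB (swapW W) a b x y)
          = ∑ b, corr TB TA W b a y x := Finset.sum_congr rfl fun b _ => e b y
        _ = ∑ b, corr TB TA W b a y' x := H Y B X A TB TA hTB hTA a x y y'
        _ = ∑ b, corr TA TB (swapW W) a b x y' := Finset.sum_congr rfl fun b _ => (e b y').symm
    · intro h1
      have hNS := hOS.mpr h1
      intro X A Y B _ _ _ _ _ _ _ _ TA TB hTA hTB b y x x'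
      have e : ∀ (a : A) (x0 : X), corr TA TB W a b x0 y = corr TB TA (swapW W) b a y x0 :=
        fun a x0 => corr_swap TA TB W a b x0 y
      calc (∑ a, corr TA TB W a b x y)
          = ∑ a, corr TB TA (swapW W) b a y x := Finset.sum_congr rfl fun a _ => e a x
        _ = ∑ a, corr TB TA (swapW W) b a y x' := hNS Y B X A TB TA hTB hTA b y x x'
        _ = ∑ a, corr TA TB W a b x' y := Finset.sum_congr rfl fun a _ => (e a x').symm

end Boxworld

end
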